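/- An infinite path ⟨v₀,v₁,v₂,…⟩ in the Farey graph converges (i.e., the sequence (v_n) converges in ℝ∞, the one-point compactification of ℝ) if and only if there do NOT exist two distinct vertices u, w ∈ ℚ∞ such that v_n = u for infinitely many n and v_n = w for infinitely many n. -/

import Mathlib

open Filter Topology OnePoint

/-- The Möbius map `z ↦ b - 1/z` on the one-point compactification `ℝ∞` of `ℝ`. -/
noncomputable def mob (b : ℤ) (z : OnePoint ℝ) : OnePoint ℝ :=
  Option.elim z ((b : ℝ) : OnePoint ℝ)
    (fun x => if x = 0 then (∞ : OnePoint ℝ) else (((b : ℝ) - 1 / x : ℝ) : OnePoint ℝ))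

/-- Value of a finite continued fraction `[b₀, …, b_m]`, i.e. `s₀(s₁(⋯ s_m(∞)))`. -/
noncomputable def cfVal : List ℤ → OnePoint ℝ
  | [] => ∞
  | b :: t => mob b (cfVal t)

/-- The `n`th convergent `v_n = S_n(∞)` of the continued fraction `[b₀, b₁, …]`. -/
noncomputable def cfConv (b : ℕ → ℤ) (n : ℕ) : OnePoint ℝ :=
  cfVal ((List.range (n + 1)).map b)

/-- `m` is a positive index at which the coefficient is `0`, `1` or `-1`. -/
def badIdx (b : ℕ → ℤ) (m : ℕ) : Prop :=
  1 ≤ m ∧ (b m = 0 ∨ b m = 1 ∨ b m = -1)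

instance (b : ℕ → ℤ) : DecidablePred (badIdx b) := fun m => by
  unfold badIdx; infer_instance

-- The singularization map `Φ` on integer sequences.
open Classical in
noncomputable def Phi (b : ℕ → ℤ) : ℕ → ℤ :=
  if h : ∃ m, badIdx b m then
    let m := Nat.find h
    if b m = 0 then
      fun k => if k + 1 < m then b k
        else if k = m - 1 then b (m - 1) + b (m + 1)
        else b (k + 2)
    else if b m = 1 then
      fun k => if k + 1 < m then b k
        else if k = m - 1 then b (m - 1) - 1
        else if k = m then b (m + 1) - 1
        else b (k + 1)
    else
      fun k => if k + 1 < m then b k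
        else if k = m - 1 then b (m - 1) + 1
        else if k = m then b (m + 1) + 1
        else b (k + 1)
  else b

-- `p(b) ∈ ℕ ∪ {∞}`: the least positive index at which `0`, `1` or `-1` occurs.
open Classical in
noncomputable def pIdx (b : ℕ → ℤ) : ℕ∞ :=
  if h : ∃ m, badIdx b m then (Nat.find h : ℕ∞) else ⊤

/-- `p⁽ⁿ⁾ → ∞` as `n → ∞`. -/
def PTendsToTop (b : ℕ → ℤ) : Prop :=
  ∀ N : ℕ, ∃ M : ℕ, ∀ n ≥ M, (N : ℕ∞) < pIdx (Phi^[n] b)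

/-- `p = liminf pⁿ`, as a natural number (junk value if the liminf is `∞`). -/
noncomputable def pLim (b : ℕ → ℤ) : ℕ :=
  (Filter.liminf (fun n => pIdx (Phi^[n] b)) Filter.atTop).toNat

/-- `q⁽ⁿ⁾ = |b⁽ⁿ⁾_{p-1}|`. -/
noncomputable def qSeq (b : ℕ → ℤ) (n : ℕ) : ℕ :=
  ((Phi^[n] b) (pLim b - 1)).natAbs

/-- Two continued fractions have the same tail. -/
def SameTail (b c : ℕ → ℤ) : Prop := ∃ r s : ℕ, ∀ k : ℕ, b (r + k) = c (s + k)

/-- `bstar` is the limit continued fraction: each coefficient of `Φⁿ(b)` stabilises on it. -/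
def EventuallyCoeff (b bstar : ℕ → ℤ) : Prop :=
  ∀ k : ℕ, ∃ N : ℕ, ∀ n ≥ N, Phi^[n] b k = bstar k

/-- The point of `ℝ∞` represented by the integer fraction `a/b` (`∞` when `b = 0`). -/
noncomputable def intPt (a b : ℤ) : OnePoint ℝ :=
  if b = 0 then ∞ else (((a : ℝ) / (b : ℝ)) : OnePoint ℝ)

/-- Adjacency in the Farey graph: `x = a/b`, `y = c/d` with `ad - bc = ±1`. -/
def FareyAdj (x y : OnePoint ℝ) : Prop :=
  ∃ a b c d : ℤ, x = intPt a b ∧ y = intPt c d ∧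
    (a * d - b * c = 1 ∨ a * d - b * c = -1)

/-- `x` is an extended rational, i.e. a member of `ℚ∞ = ℚ ∪ {∞} ⊆ ℝ∞`. -/
def IsExtRat (x : OnePoint ℝ) : Prop :=
  x = ∞ ∨ ∃ q : ℚ, x = ((q : ℝ) : OnePoint ℝ)

-- One step of the index-tracking sequence, for the current coefficient sequence `c`.
open Classical in
noncomputable def eStep (c : ℕ → ℤ) (e : ℕ) : Option ℕ :=
  if h : ∃ m, badIdx c m then
    let m := Nat.find h
    if c m = 0 then
      if e + 2 ≤ m then Option.some e
      else if e = m - 1 ∨ e = m then (none : Option ℕ)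
      else Option.some (e - 2)
    else
      if e + 2 ≤ m then Option.some e
      else if e = m - 1 then (none : Option ℕ)
      else Option.some (e - 1)
  else Option.some e

/-- The index-tracking sequence `e⁽⁰⁾(k), e⁽¹⁾(k), …` (`none` once it has terminated). -/
noncomputable def eSeq (b : ℕ → ℤ) (k : ℕ) : ℕ → Option ℕ
  | 0 => Option.some k
  | n + 1 => (eSeq b k n).bind (eStep (Phi^[n] b))


namespace SW


def rc (r : ℝ) : OnePoint ℝ := (r : OnePoint ℝ)

lemma rc_inj : Function.Injective rc := OnePoint.coe_injective

lemma rc_ne_infty (r : ℝ) : rc r ≠ ∞ := OnePoint.coe_ne_infty r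

/-- Key denominator bound: a fraction strictly between two det-±1 adjacent
fractions has denominator at least the sum of theirs. No coprimality needed. -/
lemma denomBound {a b c d r s : ℤ} (hb : 0 < b) (hd : 0 < d) (hs : 0 < s)
    (hdet : a * d - b * c = 1 ∨ a * d - b * c = -1)
    (h1 : (a : ℝ) / b < (r : ℝ) / s) (h2 : (r : ℝ) / s < (c : ℝ) / d) :
    b + d ≤ s := by
  have hb' : (0:ℝ) < b := by exact_mod_cast hb
  have hd' : (0:ℝ) < d := by exact_mod_cast hd
  have hs' : (0:ℝ) < s := by exact_mod_cast hs
  have k1 : a * s < r * b := by exact_mod_cast (div_lt_div_iff₀ hb' hs').1 h1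
  have k2 : r * d < c * s := by exact_mod_cast (div_lt_div_iff₀ hs' hd').1 h2
  have k3 : a * d < c * b := by
    exact_mod_cast (div_lt_div_iff₀ hb' hd').1 (h1.trans h2)
  have hdet' : a * d - b * c = -1 := by
    rcases hdet with h | h
    · exfalso; nlinarith
    · exact h
  have e1 : 1 ≤ c * s - d * r := by nlinarith
  have e2 : 1 ≤ r * b - s * a := by nlinarith
  have key : b * (c * s - d * r) + d * (r * b - s * a) = s := by
    linear_combination (-s) * hdet'
  nlinarith [mul_le_mul_of_nonneg_left e1 hb.le, mul_le_mul_of_nonneg_left e2 hd.le]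

lemma intPt_pos {a b : ℤ} (hb : 0 < b) : intPt a b = rc ((a : ℝ) / b) := by
  unfold intPt rc; rw [if_neg hb.ne']

lemma intPt_neg_neg (a b : ℤ) : intPt (-a) (-b) = intPt a b := by
  unfold intPt
  rcases eq_or_ne b 0 with h | h
  · simp [h]
  · rw [if_neg (by simpa using h), if_neg h]
    push_cast
    rw [neg_div_neg_eq]

/-- Normalize a Farey adjacency so both denominators are nonnegative. -/
lemma adj_rep {x y : OnePoint ℝ} (h : FareyAdj x y) :
    ∃ a b c d : ℤ, 0 ≤ b ∧ 0 ≤ d ∧ x = intPt a b ∧ y = intPt c d ∧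
      (a * d - b * c = 1 ∨ a * d - b * c = -1) := by
  obtain ⟨a, b, c, d, hx, hy, hdet⟩ := h
  rcases le_or_gt 0 b with hb | hb <;> rcases le_or_gt 0 d with hd | hd
  · exact ⟨a, b, c, d, hb, hd, hx, hy, hdet⟩
  · exact ⟨a, b, -c, -d, hb, by omega, hx, by rw [intPt_neg_neg]; exact hy, by
      rcases hdet with h | h
      · right; linarith
      · left; linarith⟩
  · exact ⟨-a, -b, c, d, by omega, hd, by rw [intPt_neg_neg]; exact hx, hy, by
      rcases hdet with h | h
      · right; linarith
      · left; linarith⟩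
  · exact ⟨-a, -b, -c, -d, by omega, by omega, by rw [intPt_neg_neg]; exact hx,
      by rw [intPt_neg_neg]; exact hy, by
      rcases hdet with h | h
      · left; linarith
      · right; linarith⟩

lemma detFlip {a b c d : ℤ} (h : a * d - b * c = 1 ∨ a * d - b * c = -1) :
    c * b - d * a = 1 ∨ c * b - d * a = -1 := by
  rcases h with h | h
  · right; linear_combination -h
  · left; linear_combination -h

/-- Extract a normalized representation for an adjacent pair whose first
member is a given real. -/
lemma adj_rep_real {x' : ℝ} {y : OnePoint ℝ} (h : FareyAdj (rc x') y) :
    ∃ r s c d : ℤ, 0 < s ∧ 0 ≤ d ∧ x' = (r : ℝ) / s ∧ y = intPt c d ∧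
      (r * d - s * c = 1 ∨ r * d - s * c = -1) := by
  obtain ⟨r, s, c, d, hs, hd, hx, hy, hdet⟩ := adj_rep h
  have hs0 : 0 < s := by
    rcases hs.lt_or_eq with h' | h'
    · exact h'
    · exfalso
      apply rc_ne_infty x'
      rw [hx, ← h']
      simp [intPt]
  refine ⟨r, s, c, d, hs0, hd, ?_, hy, hdet⟩
  exact rc_inj (hx.trans (intPt_pos hs0))

/-- Crossing lemma: a Farey edge starting strictly inside the interval of an
adjacent pair ends inside the closed interval. -/
lemma cross {a b c d : ℤ} (hb : 0 < b) (hd : 0 < d)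
    (hdet : a * d - b * c = 1 ∨ a * d - b * c = -1)
    {x y : OnePoint ℝ} (hxy : FareyAdj x y)
    (hx : x ∈ rc '' Set.Ioo ((a : ℝ) / b) ((c : ℝ) / d)) :
    y ∈ rc '' Set.Icc ((a : ℝ) / b) ((c : ℝ) / d) := by
  obtain ⟨x', hx', hxx⟩ := hx
  subst hxx
  obtain ⟨r, s, t, u, hs, hu, hxv, hyv, hdet2⟩ := adj_rep_real hxy
  rcases hu.lt_or_eq with hu0 | hu0
  · -- y is real, equal to t/u
    have hy : y = rc ((t : ℝ) / u) := by rw [hyv, intPt_pos hu0]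
    rw [hy, (rc_inj.mem_set_image)]
    constructor
    · -- a/b ≤ t/u
      by_contra hlt
      push_neg at hlt
      -- a/b strictly between t/u and r/s = x'
      have h2 : (a : ℝ) / b < (r : ℝ) / s := by rw [← hxv]; exact hx'.1
      have hba := denomBound hu0 hs hb (detFlip hdet2) hlt h2
      have hsb := denomBound hb hd hs hdet (by rw [← hxv]; exact hx'.1)
        (by rw [← hxv]; exact hx'.2)
      omega
    · -- t/u ≤ c/d
      by_contra hlt
      push_neg at hlt
      have h2 : (r : ℝ) / s < (c : ℝ) / d := by rw [← hxv]; exact hx'.2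
      have hdb := denomBound hs hu0 hd hdet2 h2 hlt
      have hsb := denomBound hb hd hs hdet (by rw [← hxv]; exact hx'.1)
        (by rw [← hxv]; exact hx'.2)
      omega
  · -- y = ∞, so s must be 1, contradiction
    exfalso
    have hs1 : s = 1 := by
      have hdvd : s ∣ 1 := by
        rcases hdet2 with h | h <;> rw [← hu0] at h
        · exact ⟨-t, by linear_combination -h⟩
        · exact ⟨t, by linear_combination h⟩
      have := Int.isUnit_iff.1 (isUnit_of_dvd_one hdvd)
      omega
    have hsb := denomBound hb hd hs hdet (by rw [← hxv]; exact hx'.1)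
      (by rw [← hxv]; exact hx'.2)
    omega

/-- Crossing lemma at `+∞` side. -/
lemma crossInfR {n : ℤ} {x y : OnePoint ℝ} (hxy : FareyAdj x y)
    (hx : x ∈ rc '' Set.Ioi ((n : ℤ) : ℝ)) :
    y = ∞ ∨ y ∈ rc '' Set.Ici ((n : ℤ) : ℝ) := by
  obtain ⟨x', hx', hxx⟩ := hx
  subst hxx
  obtain ⟨r, s, t, u, hs, hu, hxv, hyv, hdet2⟩ := adj_rep_real hxy
  rcases hu.lt_or_eq with hu0 | hu0
  · right
    have hy : y = rc ((t : ℝ) / u) := by rw [hyv, intPt_pos hu0]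
    rw [hy, (rc_inj.mem_set_image)]
    by_contra hlt
    simp only [Set.mem_Ici, not_le] at hlt
    have hxn : ((n : ℤ) : ℝ) / (1:ℤ) < (r : ℝ) / s := by
      rw [← hxv]; simpa using hx'
    have hlt' : ((t : ℝ)) / u < ((n : ℤ) : ℝ) / (1:ℤ) := by simpa using hlt
    have := denomBound hu0 hs one_pos (detFlip hdet2) hlt' hxn
    omega
  · left
    rw [hyv, ← hu0]; simp [intPt]

/-- Crossing lemma at `-∞` side. -/
lemma crossInfL {n : ℤ} {x y : OnePoint ℝ} (hxy : FareyAdj x y)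
    (hx : x ∈ rc '' Set.Iio ((n : ℤ) : ℝ)) :
    y = ∞ ∨ y ∈ rc '' Set.Iic ((n : ℤ) : ℝ) := by
  obtain ⟨x', hx', hxx⟩ := hx
  subst hxx
  obtain ⟨r, s, t, u, hs, hu, hxv, hyv, hdet2⟩ := adj_rep_real hxy
  rcases hu.lt_or_eq with hu0 | hu0
  · right
    have hy : y = rc ((t : ℝ) / u) := by rw [hyv, intPt_pos hu0]
    rw [hy, (rc_inj.mem_set_image)]
    by_contra hlt
    simp only [Set.mem_Iic, not_le] at hlt
    have hxn : (r : ℝ) / s < ((n : ℤ) : ℝ) / (1:ℤ) := by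
      rw [← hxv]; simpa using hx'
    have hlt' : ((n : ℤ) : ℝ) / (1:ℤ) < (t : ℝ) / u := by simpa using hlt
    have := denomBound hs hu0 one_pos hdet2 hxn hlt'
    omega
  · left
    rw [hyv, ← hu0]; simp [intPt]

/-- The barrier argument: if the path cannot leave `A` without entering `B`,
visits `A` infinitely often and leaves `A ∪ B` infinitely often, then some
point of the finite set `B` is visited infinitely often. -/
lemma barrier {v : ℕ → OnePoint ℝ} {A B : Set (OnePoint ℝ)} (hB : B.Finite)
    (hstep : ∀ n, v n ∈ A → v (n + 1) ∈ A ∪ B)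
    (hA : {n | v n ∈ A}.Infinite) (hC : {n | v n ∉ A ∪ B}.Infinite) :
    ∃ u ∈ B, {n | v n = u}.Infinite := by
  by_contra hcon
  push_neg at hcon
  have hfin : {n | v n ∈ B}.Finite := by
    have : {n | v n ∈ B} = ⋃ u ∈ B, {n | v n = u} := by
      ext n; simp [Set.mem_setOf_eq, Set.mem_iUnion]
    rw [this]
    exact hB.biUnion fun u hu => hcon u hu
  obtain ⟨N, hN⟩ := hfin.bddAbove
  obtain ⟨n₀, hn₀A, hn₀N⟩ := hA.exists_gt N
  have hstay : ∀ k, v (n₀ + k) ∈ A := by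
    intro k
    induction k with
    | zero => exact hn₀A
    | succ k ih =>
      rcases hstep _ ih with h | h
      · exact h
      · exfalso
        have : n₀ + k + 1 ≤ N := hN h
        omega
  obtain ⟨m, hmC, hmn⟩ := hC.exists_gt n₀
  have : v m ∈ A := by
    have := hstay (m - n₀)
    rwa [Nat.add_sub_cancel' hmn.le] at this
  exact hmC (Or.inl this)

lemma rc_image_open {s : Set ℝ} (h : IsOpen s) : IsOpen (rc '' s) :=
  OnePoint.isOpen_image_coe.2 h

lemma rc_image_Icc_closed (p q : ℝ) : IsClosed (rc '' Set.Icc p q) :=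
  (isCompact_Icc.image OnePoint.continuous_coe).isClosed

lemma cluster_infinite {v : ℕ → OnePoint ℝ} {α : OnePoint ℝ}
    (h : MapClusterPt α atTop v) {U : Set (OnePoint ℝ)} (hU : U ∈ 𝓝 α) :
    {n | v n ∈ U}.Infinite :=
  Nat.frequently_atTop_iff_infinite.1 (mapClusterPt_iff_frequently.1 h U hU)

lemma cluster_of_infinite {v : ℕ → OnePoint ℝ} {u : OnePoint ℝ}
    (h : {n | v n = u}.Infinite) : MapClusterPt u atTop v := by
  rw [mapClusterPt_iff_frequently]
  intro s hs
  rw [Nat.frequently_atTop_iff_infinite]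
  exact h.mono fun n hn => by
    simp only [Set.mem_setOf_eq] at hn ⊢
    rw [hn]; exact mem_of_mem_nhds hs

lemma tendsto_of_unique_cluster {v : ℕ → OnePoint ℝ} {L : OnePoint ℝ}
    (huniq : ∀ x, MapClusterPt x atTop v → x = L) :
    Tendsto v atTop (𝓝 L) := by
  by_contra hnot
  rw [Filter.tendsto_def] at hnot
  push_neg at hnot
  obtain ⟨U₀, hU₀, hpre⟩ := hnot
  set U := interior U₀ with hUdef
  have hUo : IsOpen U := isOpen_interior
  have hLU : L ∈ U := mem_interior_iff_mem_nhds.2 hU₀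
  set S : Set ℕ := {n | v n ∈ Uᶜ} with hS
  have hfreq : ∃ᶠ n in atTop, n ∈ S := by
    have : ¬ ∀ᶠ n in atTop, v n ∈ U₀ := hpre
    rw [Filter.not_eventually] at this
    exact this.mono fun n hn => fun h => hn (interior_subset h)
  have hne : (atTop ⊓ 𝓟 S).NeBot := frequently_iff_neBot.1 hfreq
  obtain ⟨x, hx⟩ := exists_clusterPt_of_compactSpace (map v (atTop ⊓ 𝓟 S))
  have hxc : MapClusterPt x atTop v := hx.mono (map_mono inf_le_left)
  have hxU : x ∈ Uᶜ := by
    have hle : map v (atTop ⊓ 𝓟 S) ≤ 𝓟 Uᶜ := by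
      rw [le_principal_iff, mem_map]
      exact mem_inf_of_right fun n hn => hn
    have := mem_closure_iff_clusterPt.2 (hx.mono hle)
    rwa [hUo.isClosed_compl.closure_eq] at this
  exact hxU (huniq x hxc ▸ hLU)

/-- Stern–Brocot style shrinking adjacent pairs around an irrational. -/
lemma sb {α' : ℝ} (hirr : ∀ ρ : ℚ, (ρ : ℝ) ≠ α') (k : ℕ) :
    ∃ a b c d : ℤ, 0 < b ∧ 0 < d ∧ (a : ℝ) / b < α' ∧ α' < (c : ℝ) / d ∧
      a * d - b * c = -1 ∧ (k : ℤ) + 2 ≤ b + d := by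
  induction k with
  | zero =>
    refine ⟨⌊α'⌋, 1, ⌊α'⌋ + 1, 1, one_pos, one_pos, ?_, ?_, by ring, by norm_num⟩
    · have hne : ((⌊α'⌋ : ℚ) : ℝ) ≠ α' := hirr _
      push_cast at hne
      have := Int.floor_le α'
      push_cast
      simpa using this.lt_of_ne hne
    · push_cast
      simpa using Int.lt_floor_add_one α'
  | succ k ih =>
    obtain ⟨a, b, c, d, hb, hd, h1, h2, hdet, hsum⟩ := ih
    have hbd : (0 : ℝ) < (b : ℝ) + d := by
      have : (0:ℤ) < b + d := by omega
      exact_mod_cast this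
    have hmne : ((a : ℝ) + c) / ((b : ℝ) + d) ≠ α' := by
      have := hirr (((a + c : ℤ) : ℚ) / ((b + d : ℤ) : ℚ))
      push_cast at this
      exact this
    rcases lt_or_gt_of_ne hmne with hlt | hgt
    · -- mediant < α' : take (mediant, c/d)
      refine ⟨a + c, b + d, c, d, by omega, hd, ?_, h2, by linear_combination hdet, by omega⟩
      push_cast
      exact hlt
    · refine ⟨a, b, a + c, b + d, hb, by omega, h1, ?_, by linear_combination hdet, by omega⟩
      push_cast
      exact hgt

/-- A small adjacent interval around an irrational point. -/
lemma band_irrat {α' : ℝ} (hirr : ∀ ρ : ℚ, (ρ : ℝ) ≠ α') {ε : ℝ} (hε : 0 < ε) :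
    ∃ p q : ℝ, p < α' ∧ α' < q ∧ q - p < ε ∧
      ∀ ⦃x y : OnePoint ℝ⦄, FareyAdj x y → x ∈ rc '' Set.Ioo p q → x ≠ rc α' →
        y ∈ rc '' Set.Icc p q := by
  set k : ℕ := ⌈1 / ε⌉₊ with hk
  obtain ⟨a, b, c, d, hb, hd, h1, h2, hdet, hsum⟩ := sb hirr k
  have hb' : (0 : ℝ) < b := by exact_mod_cast hb
  have hd' : (0 : ℝ) < d := by exact_mod_cast hd
  refine ⟨(a : ℝ) / b, (c : ℝ) / d, h1, h2, ?_, ?_⟩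
  · -- gap estimate
    have hbd : (k : ℤ) + 1 ≤ b * d := by nlinarith
    have hbd' : (k : ℝ) + 1 ≤ (b : ℝ) * d := by exact_mod_cast hbd
    have hkε : 1 / ε ≤ (k : ℝ) := Nat.le_ceil _
    have hgap : (c : ℝ) / d - (a : ℝ) / b = 1 / ((b : ℝ) * d) := by
      rw [div_sub_div _ _ hd'.ne' hb'.ne']
      have hnum : (c : ℝ) * b - (d : ℝ) * a = 1 := by
        have : c * b - d * a = (1 : ℤ) := by linear_combination -hdet
        exact_mod_cast this
      rw [hnum]
      rw [mul_comm]
    rw [hgap]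
    rw [div_lt_iff₀ (by positivity)]
    have h1ε : (1:ℝ) / ε < (b:ℝ) * d := by linarith
    have := (div_lt_iff₀ hε).1 h1ε
    linarith
  · intro x y hxy hx _
    exact cross hb hd (Or.inr hdet) hxy hx
/-- A small adjacent interval around a rational point, with both endpoints
Farey-neighbours of it. -/
lemma band_rat (ρ : ℚ) {ε : ℝ} (hε : 0 < ε) :
    ∃ p q : ℝ, p < (ρ : ℝ) ∧ (ρ : ℝ) < q ∧ q - p < ε ∧
      ∀ ⦃x y : OnePoint ℝ⦄, FareyAdj x y → x ∈ rc '' Set.Ioo p q → x ≠ rc (ρ : ℝ) →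
        y ∈ rc '' Set.Icc p q := by
  set A : ℤ := ρ.num with hA
  set B : ℤ := (ρ.den : ℤ) with hB
  have hBpos : 0 < B := by rw [hB]; exact_mod_cast ρ.pos
  have hbez : A * Int.gcdA A B + B * Int.gcdB A B = 1 := by
    have h1 : Int.gcd A B = 1 := by
      have hred := ρ.reduced
      simpa [Int.gcd, hA, hB, Int.natAbs_natCast] using hred
    have h2 := Int.gcd_eq_gcd_ab A B
    rw [h1] at h2
    exact_mod_cast h2.symm
  set x : ℤ := Int.gcdA A B with hx
  set y : ℤ := Int.gcdB A B with hy
  set t : ℤ := |x| + ⌈2 / ε⌉ + 1 with ht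
  have hceil0 : (0 : ℤ) ≤ ⌈2 / ε⌉ := Int.ceil_nonneg (by positivity)
  have ht0 : 0 ≤ t := by have := abs_nonneg x; omega
  have htB : t * 1 ≤ t * B := by
    apply mul_le_mul_of_nonneg_left _ ht0
    omega
  set a : ℤ := -y + t * A with ha
  set b : ℤ := x + t * B with hb
  set c : ℤ := y + t * A with hc
  set d : ℤ := -x + t * B with hd
  have hb2 : ⌈2 / ε⌉ + 1 ≤ b := by
    have h1 := neg_abs_le x
    have : x + t ≤ b := by rw [hb]; linarith
    rw [ht] at this; linarith
  have hd2 : ⌈2 / ε⌉ + 1 ≤ d := by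
    have h1 := le_abs_self x
    have : -x + t ≤ d := by rw [hd]; linarith
    rw [ht] at this; linarith
  have hbpos : 0 < b := by omega
  have hdpos : 0 < d := by omega
  have hb' : (0 : ℝ) < b := by exact_mod_cast hbpos
  have hd' : (0 : ℝ) < d := by exact_mod_cast hdpos
  have hB' : (0 : ℝ) < B := by exact_mod_cast hBpos
  -- real lower bounds 2/ε < b, d
  have hbR : 2 / ε < (b : ℝ) := by
    have h1 : (2:ℝ) / ε ≤ ((⌈2 / ε⌉ : ℤ) : ℝ) := Int.le_ceil _
    have h2 : ((⌈2 / ε⌉ : ℤ) : ℝ) + 1 ≤ (b : ℝ) := by exact_mod_cast hb2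
    linarith
  have hdR : 2 / ε < (d : ℝ) := by
    have h1 : (2:ℝ) / ε ≤ ((⌈2 / ε⌉ : ℤ) : ℝ) := Int.le_ceil _
    have h2 : ((⌈2 / ε⌉ : ℤ) : ℝ) + 1 ≤ (d : ℝ) := by exact_mod_cast hd2
    linarith
  have hdet1 : a * B - b * A = -1 := by
    rw [ha, hb]; linear_combination -hbez
  have hdet2 : A * d - B * c = -1 := by
    rw [hc, hd]; linear_combination -hbez
  have hρ : (ρ : ℝ) = (A : ℝ) / B := by
    rw [Rat.cast_def, hA, hB]; push_cast; ring
  -- gaps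
  have hkey1 : (A : ℝ) * b - (B : ℝ) * a = 1 := by
    have : A * b - B * a = (1 : ℤ) := by linear_combination -hdet1
    exact_mod_cast this
  have hkey2 : (c : ℝ) * B - (d : ℝ) * A = 1 := by
    have : c * B - d * A = (1 : ℤ) := by linear_combination -hdet2
    exact_mod_cast this
  have hgap1 : (ρ : ℝ) - (a : ℝ) / b = 1 / ((B : ℝ) * b) := by
    rw [hρ, div_sub_div _ _ hB'.ne' hb'.ne', hkey1]
  have hgap2 : (c : ℝ) / d - (ρ : ℝ) = 1 / ((d : ℝ) * B) := by
    rw [hρ, div_sub_div _ _ hd'.ne' hB'.ne', hkey2]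
  have hB1 : (1 : ℝ) ≤ B := by exact_mod_cast hBpos
  have hsmall1 : (ρ : ℝ) - (a : ℝ) / b < ε / 2 := by
    rw [hgap1]
    rw [div_lt_iff₀ (by positivity)]
    have h2 : (2:ℝ) < ε * b := by
      have := (div_lt_iff₀ hε).1 hbR
      linarith
    nlinarith
  have hsmall2 : (c : ℝ) / d - (ρ : ℝ) < ε / 2 := by
    rw [hgap2]
    rw [div_lt_iff₀ (by positivity)]
    have h2 : (2:ℝ) < ε * d := by
      have := (div_lt_iff₀ hε).1 hdR
      linarith
    nlinarith
  have hplt : (a : ℝ) / b < (ρ : ℝ) := by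
    have : (0:ℝ) < 1 / ((B : ℝ) * b) := by positivity
    linarith [hgap1]
  have hqgt : (ρ : ℝ) < (c : ℝ) / d := by
    have : (0:ℝ) < 1 / ((d : ℝ) * B) := by positivity
    linarith [hgap2]
  refine ⟨(a : ℝ) / b, (c : ℝ) / d, hplt, hqgt, by linarith, ?_⟩
  intro x₀ y₀ hxy hx₀ hxne
  obtain ⟨x', hx'm, rfl⟩ := hx₀
  have hx'ne : x' ≠ (ρ : ℝ) := fun h => hxne (congrArg rc h)
  rcases lt_or_gt_of_ne hx'ne with hlt | hgt
  · have hcr := cross hbpos hBpos (Or.inr hdet1) hxy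
      ⟨x', ⟨hx'm.1, by rw [← hρ]; exact hlt⟩, rfl⟩
    have hmid1 : (A : ℝ) / B ≤ (c : ℝ) / d := by
      have hq' := hqgt; rw [hρ] at hq'; exact hq'.le
    obtain ⟨z, hz, rfl⟩ := hcr
    exact ⟨z, ⟨hz.1, hz.2.trans hmid1⟩, rfl⟩
  · have hcr := cross hBpos hdpos (Or.inr hdet2) hxy
      ⟨x', ⟨by rw [← hρ]; exact hgt, hx'm.2⟩, rfl⟩
    have hmid2 : (a : ℝ) / b ≤ (A : ℝ) / B := by
      have hp' := hplt; rw [hρ] at hp'; exact hp'.le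
    obtain ⟨z, hz, rfl⟩ := hcr
    exact ⟨z, ⟨hmid2.trans hz.1, hz.2⟩, rfl⟩
@[simp] lemma rc_eq_rc {r s : ℝ} : rc r = rc s ↔ r = s := rc_inj.eq_iff
@[simp] lemma mem_rc_image {s : Set ℝ} {r : ℝ} : rc r ∈ rc '' s ↔ r ∈ s :=
  rc_inj.mem_set_image
@[simp] lemma rc_eq_infty_iff {r : ℝ} : rc r = ∞ ↔ False :=
  ⟨rc_ne_infty r, False.elim⟩
@[simp] lemma infty_eq_rc_iff {r : ℝ} : (∞ : OnePoint ℝ) = rc r ↔ False :=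
  ⟨fun h => rc_ne_infty r h.symm, False.elim⟩
@[simp] lemma infty_mem_rc_image {s : Set ℝ} : (∞ : OnePoint ℝ) ∈ rc '' s ↔ False := by
  constructor
  · rintro ⟨w, _, hw⟩; exact rc_ne_infty w hw
  · exact False.elim

lemma onePoint_cases (x : OnePoint ℝ) : x = ∞ ∨ ∃ r : ℝ, x = rc r := by
  cases x with
  | infty => exact Or.inl rfl
  | coe r => exact Or.inr ⟨r, rfl⟩

/-- Combined band lemma. -/
lemma band (α' : ℝ) {ε : ℝ} (hε : 0 < ε) :
    ∃ p q : ℝ, p < α' ∧ α' < q ∧ q - p < ε ∧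
      ∀ ⦃x y : OnePoint ℝ⦄, FareyAdj x y → x ∈ rc '' Set.Ioo p q → x ≠ rc α' →
        y ∈ rc '' Set.Icc p q := by
  by_cases hrat : ∃ ρ : ℚ, (ρ : ℝ) = α'
  · obtain ⟨ρ, rfl⟩ := hrat
    exact band_rat ρ hε
  · push_neg at hrat
    exact band_irrat hrat hε

/-- Main lemma: given two distinct cluster points, some vertex different from
the second one is visited infinitely often. -/
lemma lemT {v : ℕ → OnePoint ℝ} (hv : ∀ n, FareyAdj (v n) (v (n + 1)))
    {α β : OnePoint ℝ} (hα : MapClusterPt α atTop v) (hβ : MapClusterPt β atTop v)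
    (hne : α ≠ β) : ∃ u, u ≠ β ∧ {n | v n = u}.Infinite := by
  by_cases hαi : {n | v n = α}.Infinite
  · exact ⟨α, hne, hαi⟩
  have hαf : {n | v n = α}.Finite := Set.not_infinite.1 hαi
  rcases onePoint_cases α with rfl | ⟨α', rfl⟩
  · -- α = ∞
    obtain ⟨β', rfl⟩ : ∃ r : ℝ, β = rc r := by
      rcases onePoint_cases β with h | h
      · exact absurd h.symm hne
      · exact h
    set n : ℤ := ⌈|β'|⌉ + 1 with hn
    have hβn : |β'| < (n : ℝ) := by
      have := Int.le_ceil |β'|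
      rw [hn]; push_cast; linarith
    have hβn' : -(n : ℝ) < β' ∧ β' < (n : ℝ) := abs_lt.1 hβn
    set A : Set (OnePoint ℝ) :=
      rc '' (Set.Iio (((-n : ℤ)) : ℝ) ∪ Set.Ioi ((n : ℤ) : ℝ)) with hA
    set B : Set (OnePoint ℝ) := {rc (((-n : ℤ)) : ℝ), rc ((n : ℤ) : ℝ), ∞} with hB
    have hBfin : B.Finite := (Set.finite_singleton _).insert _ |>.insert _
    have hstep : ∀ k, v k ∈ A → v (k + 1) ∈ A ∪ B := by
      intro k hk
      rw [hA] at hk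
      obtain ⟨x', hx', hxe⟩ := hk
      rcases hx' with hlt | hgt
      · rcases crossInfL (n := -n) (hv k)
          (by rw [← hxe]; exact ⟨x', hlt, rfl⟩) with h | h
        · right; rw [h, hB]; simp
        · obtain ⟨y', hy', hye⟩ := h
          rcases (Set.mem_Iic.1 hy').lt_or_eq with h1 | h1
          · left; rw [hA, ← hye]; exact ⟨y', Or.inl h1, rfl⟩
          · right; rw [hB, ← hye, h1]; simp
      · rcases crossInfR (n := n) (hv k)
          (by rw [← hxe]; exact ⟨x', hgt, rfl⟩) with h | h
        · right; rw [h, hB]; simp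
        · obtain ⟨y', hy', hye⟩ := h
          rcases (Set.mem_Ici.1 hy').lt_or_eq with h1 | h1
          · left; rw [hA, ← hye]; exact ⟨y', Or.inr h1, rfl⟩
          · right; rw [hB, ← hye, ← h1]; simp
    have hNopen : IsOpen ({∞} ∪ A : Set (OnePoint ℝ)) := by
      have hcompl : ({∞} ∪ A : Set (OnePoint ℝ))ᶜ
          = rc '' Set.Icc (((-n : ℤ)) : ℝ) ((n : ℤ) : ℝ) := by
        ext z
        rcases onePoint_cases z with rfl | ⟨z', rfl⟩
        · simp [hA]
        · simp only [Set.mem_compl_iff, Set.mem_union, Set.mem_singleton_iff, hA,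
            mem_rc_image, rc_eq_infty_iff, false_or, Set.mem_Iio, Set.mem_Ioi,
            Set.mem_Icc, not_or, not_lt]
      rw [← compl_compl ({∞} ∪ A : Set (OnePoint ℝ)), hcompl]
      exact (rc_image_Icc_closed _ _).isOpen_compl
    have hAinf : {k | v k ∈ A}.Infinite := by
      have hN : ({∞} ∪ A : Set (OnePoint ℝ)) ∈ 𝓝 ∞ := hNopen.mem_nhds (Or.inl rfl)
      refine ((cluster_infinite hα hN).diff hαf).mono ?_
      rintro k ⟨h1, h2⟩
      rcases h1 with h1 | h1
      · exact absurd h1 h2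
      · exact h1
    have hCinf : {k | v k ∉ A ∪ B}.Infinite := by
      have hW : (rc '' Set.Ioo (((-n : ℤ)) : ℝ) ((n : ℤ) : ℝ)) ∈ 𝓝 (rc β') := by
        refine (rc_image_open isOpen_Ioo).mem_nhds ⟨β', ⟨?_, ?_⟩, rfl⟩
        · push_cast; exact hβn'.1
        · push_cast; exact hβn'.2
      refine (cluster_infinite hβ hW).mono ?_
      rintro k ⟨z', hz', hze⟩
      simp only [Set.mem_setOf_eq]
      rw [← hze]
      simp only [hA, hB, Set.mem_union, mem_rc_image, Set.mem_Iio, Set.mem_Ioi,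
        Set.mem_insert_iff, Set.mem_singleton_iff, rc_eq_rc, rc_eq_infty_iff,
        or_false, not_or]
      obtain ⟨hz1, hz2⟩ := hz'
      exact ⟨⟨not_lt.2 hz1.le, not_lt.2 hz2.le⟩, by linarith, by linarith⟩
    obtain ⟨u, huB, huI⟩ := barrier hBfin hstep hAinf hCinf
    refine ⟨u, ?_, huI⟩
    rw [hB] at huB
    simp only [Set.mem_insert_iff, Set.mem_singleton_iff] at huB
    rcases huB with rfl | rfl | rfl
    · simp only [ne_eq, rc_eq_rc]
      intro h; rw [← h] at hβn'; push_cast at hβn'; linarith [hβn'.1]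
    · simp only [ne_eq, rc_eq_rc]
      intro h; rw [← h] at hβn'; linarith [hβn'.2]
    · exact fun h => rc_ne_infty β' h.symm
  · -- α = rc α'
    obtain ⟨ε, hε, hβfar⟩ : ∃ ε : ℝ, 0 < ε ∧ ∀ z : ℝ, |z - α'| < ε → rc z ≠ β := by
      rcases onePoint_cases β with rfl | ⟨β', rfl⟩
      · exact ⟨1, one_pos, fun z _ => rc_ne_infty z⟩
      · refine ⟨|β' - α'|, ?_, ?_⟩
        · have hne' : β' ≠ α' := fun h => hne (by rw [h])
          exact abs_sub_pos.2 hne'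
        · intro z hz he
          have : z = β' := rc_inj he
          subst this
          exact absurd hz (lt_irrefl _)
    obtain ⟨p, q, hp, hq, hgap, hcross⟩ := band α' hε
    set A : Set (OnePoint ℝ) := rc '' Set.Ioo p q \ {rc α'} with hA
    set B : Set (OnePoint ℝ) := {rc p, rc q, rc α'} with hB
    have hBfin : B.Finite := (Set.finite_singleton _).insert _ |>.insert _
    have hIccsub : rc '' Set.Icc p q ⊆ A ∪ B := by
      rintro z ⟨z', hz', rfl⟩
      rcases hz'.1.lt_or_eq with h1 | h1
      · rcases hz'.2.lt_or_eq with h2 | h2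
        · by_cases hzα : rc z' = rc α'
          · right; rw [hB, hzα]; simp
          · left; exact ⟨⟨z', ⟨h1, h2⟩, rfl⟩, hzα⟩
        · right; rw [hB, h2]; simp
      · right; rw [hB, ← h1]; simp
    have hstep : ∀ k, v k ∈ A → v (k + 1) ∈ A ∪ B := by
      intro k hk
      rw [hA] at hk
      exact hIccsub (hcross (hv k) hk.1 hk.2)
    have hAinf : {k | v k ∈ A}.Infinite := by
      have hN : rc '' Set.Ioo p q ∈ 𝓝 (rc α') :=
        (rc_image_open isOpen_Ioo).mem_nhds ⟨α', ⟨hp, hq⟩, rfl⟩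
      refine ((cluster_infinite hα hN).diff hαf).mono ?_
      rintro k ⟨h1, h2⟩
      exact ⟨h1, h2⟩
    have hβninIcc : β ∉ rc '' Set.Icc p q := by
      rintro ⟨z', hz', hze⟩
      refine hβfar z' ?_ hze
      rw [abs_lt]
      constructor
      · have := hz'.1; linarith
      · have := hz'.2; linarith
    have hCinf : {k | v k ∉ A ∪ B}.Infinite := by
      have hW : (rc '' Set.Icc p q)ᶜ ∈ 𝓝 β :=
        (rc_image_Icc_closed p q).isOpen_compl.mem_nhds hβninIcc
      refine (cluster_infinite hβ hW).mono ?_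
      intro k hk hmem
      apply hk
      rcases hmem with h | h
      · rw [hA] at h
        obtain ⟨⟨z', hz', hze⟩, _⟩ := h
        exact ⟨z', Set.Ioo_subset_Icc_self hz', hze⟩
      · rw [hB] at h
        simp only [Set.mem_insert_iff, Set.mem_singleton_iff] at h
        rcases h with h | h | h <;> rw [h]
        · exact ⟨p, ⟨le_refl _, (hp.trans hq).le⟩, rfl⟩
        · exact ⟨q, ⟨(hp.trans hq).le, le_refl _⟩, rfl⟩
        · exact ⟨α', ⟨hp.le, hq.le⟩, rfl⟩
    obtain ⟨u, huB, huI⟩ := barrier hBfin hstep hAinf hCinf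
    refine ⟨u, ?_, huI⟩
    intro he
    apply hβninIcc
    rw [← he]
    rw [hB] at huB
    simp only [Set.mem_insert_iff, Set.mem_singleton_iff] at huB
    rcases huB with rfl | rfl | rfl
    · exact ⟨p, ⟨le_refl _, (hp.trans hq).le⟩, rfl⟩
    · exact ⟨q, ⟨(hp.trans hq).le, le_refl _⟩, rfl⟩
    · exact ⟨α', ⟨hp.le, hq.le⟩, rfl⟩
lemma extRat {x y : OnePoint ℝ} (h : FareyAdj x y) : IsExtRat x := by
  obtain ⟨a, b, c, d, hb, hd, hx, hy, hdet⟩ := adj_rep h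
  rcases hb.lt_or_eq with hb0 | hb0
  · right
    refine ⟨(a : ℚ) / (b : ℚ), ?_⟩
    rw [hx, intPt_pos hb0]
    show rc ((a:ℝ)/b) = rc (((a : ℚ) / (b : ℚ) : ℚ) : ℝ)
    rw [rc_eq_rc]
    push_cast
    ring
  · left
    rw [hx, ← hb0]
    simp [intPt]

theorem stmt5' (v : ℕ → OnePoint ℝ) (hv : ∀ n : ℕ, FareyAdj (v n) (v (n + 1))) :
    (∃ L : OnePoint ℝ, Filter.Tendsto v Filter.atTop (nhds L)) ↔
      ¬ ∃ u w : OnePoint ℝ, IsExtRat u ∧ IsExtRat w ∧ u ≠ w ∧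
        {n : ℕ | v n = u}.Infinite ∧ {n : ℕ | v n = w}.Infinite := by
  constructor
  · rintro ⟨L, hL⟩ ⟨u, w, _, _, huw, hu, hw⟩
    have key : ∀ z : OnePoint ℝ, {n | v n = z}.Infinite → z = L := by
      intro z hz
      have h1 : ClusterPt z (Filter.map v Filter.atTop) := cluster_of_infinite hz
      have h2 : ClusterPt z (𝓝 L) := h1.mono hL
      exact eq_of_nhds_neBot h2
    exact huw ((key u hu).trans (key w hw).symm)
  · intro hno
    by_contra hnot
    obtain ⟨L, hL⟩ := exists_clusterPt_of_compactSpace (Filter.map v Filter.atTop)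
    have hLc : MapClusterPt L atTop v := hL
    have hnu : ¬ ∀ x, MapClusterPt x atTop v → x = L :=
      fun h => hnot ⟨L, tendsto_of_unique_cluster h⟩
    push_neg at hnu
    obtain ⟨M, hM, hML⟩ := hnu
    obtain ⟨u₁, hu₁L, hu₁⟩ := lemT hv hM hLc hML
    obtain ⟨u₂, hu₂u₁, hu₂⟩ := lemT hv hLc (cluster_of_infinite hu₁) (Ne.symm hu₁L)
    have hex : ∀ z : OnePoint ℝ, {n | v n = z}.Infinite → IsExtRat z := by
      intro z hz
      obtain ⟨m, hm⟩ := hz.nonempty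
      rw [Set.mem_setOf_eq] at hm
      rw [← hm]
      exact extRat (hv m)
    exact hno ⟨u₂, u₁, hex u₂ hu₂, hex u₁ hu₁, hu₂u₁, hu₂, hu₁⟩
end SW

/-- **Theorem 3.** An infinite path in the Farey graph converges in `ℝ∞` if and only if
it does not return to two distinct vertices infinitely often. -/
theorem stmt5 (v : ℕ → OnePoint ℝ) (hv : ∀ n : ℕ, FareyAdj (v n) (v (n + 1))) :
    (∃ L : OnePoint ℝ, Filter.Tendsto v Filter.atTop (nhds L)) ↔
      ¬ ∃ u w : OnePoint ℝ, IsExtRat u ∧ IsExtRat w ∧ u ≠ w ∧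
        {n : ℕ | v n = u}.Infinite ∧ {n : ℕ | v n = w}.Infinite :=
  SW.stmt5' v hv
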